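/- Let p be an odd positive integer, q a positive integer relatively prime to p, and q* the unique integer with 1 ≤ q* ≤ p−1 and q·q* ≡ 1 (mod p). Let ℓ be an even integer with 0 < ℓ < p. Then δ^τ(p;q,ℓ) = (1/(2p)) · Σ_{t^p = 1} [ 2·Σ_{i=1}^{ℓ−1} t^{−i} + t^{−ℓ} + 1 ] · [ 2·Σ_{j=1}^{q*ℓ−1} (−1)^j t^{qj} + t^{ℓ} + 1 ], where the outer sum runs over all complex p-th roots of unity t (including t = 1). -/

import Mathlib

open Finset Real Complex Polynomial

/-- The modified Casson–Gordon trigonometric sum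
`δ^τ(p;q,ℓ) = (2/p) Σ_{k=1}^{p−1} cot(πk/p) · cot(πqk/p + π/2) · sin²(πkℓ/p)`. -/
noncomputable def deltaTau (p q : ℕ) (l : ℤ) : ℝ :=
  (2 / p) * ∑ k ∈ Finset.Icc 1 (p - 1),
    Real.cot (Real.pi * k / p) * Real.cot (Real.pi * q * k / p + Real.pi / 2) *
      (Real.sin (Real.pi * k * l / p)) ^ 2

private lemma bracket_key (s : ℂ) (n : ℕ) (hn : 1 ≤ n) :
    (s - 1) * (2 * ∑ i ∈ Finset.Icc 1 (n - 1), s ^ i + s ^ n + 1) = (s + 1) * (s ^ n - 1) := by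
  have h2' : 1 + ∑ i ∈ Finset.Icc 1 (n - 1), s ^ i = ∑ i ∈ Finset.range n, s ^ i := by
    have h1 : Finset.Icc 1 (n - 1) = Finset.Ico 1 n := by
      rw [← Finset.Ico_add_one_right_eq_Icc]
      congr 1
      omega
    have h2 : ((∑ i ∈ Finset.Ico 0 1, s ^ i) + ∑ i ∈ Finset.Ico 1 n, s ^ i)
        = ∑ i ∈ Finset.Ico 0 n, s ^ i :=
      Finset.sum_Ico_consecutive _ (by omega) (by omega)
    have h0 : (∑ i ∈ Finset.Ico 0 1, s ^ i) = 1 := by simp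
    rw [h1, Finset.range_eq_Ico, ← h2, h0]
  have h3 : (∑ i ∈ Finset.range n, s ^ i) * (s - 1) = s ^ n - 1 := geom_sum_mul s n
  linear_combination 2 * h3 + 2 * (s - 1) * h2'

private lemma master (a b c d e f A B : ℂ)
    (hab : a ^ 2 + b ^ 2 = 1) (hcd : c ^ 2 + d ^ 2 = 1) (hef : e ^ 2 + f ^ 2 = 1)
    (hs : (a - b * Complex.I) ^ 2 - 1 ≠ 0) (hv : -((c + d * Complex.I) ^ 2) - 1 ≠ 0)
    (hA : A * ((a - b * Complex.I) ^ 2 - 1)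
        = ((a - b * Complex.I) ^ 2 + 1) * ((e - f * Complex.I) ^ 2 - 1))
    (hB : B * (-((c + d * Complex.I) ^ 2) - 1)
        = (-((c + d * Complex.I) ^ 2) + 1) * ((e + f * Complex.I) ^ 2 - 1)) :
    A * B = 4 * (a / b) * (-(d / c)) * f ^ 2 := by
  have Isq : Complex.I ^ 2 = -1 := Complex.I_sq
  have h1 : (a - b * Complex.I) ^ 2 + 1 = 2 * a * (a - b * Complex.I) := by
    linear_combination (-1 : ℂ) * hab + b ^ 2 * Isq
  have h2 : (a - b * Complex.I) ^ 2 - 1 = -2 * b * (b + a * Complex.I) := by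
    linear_combination hab + b ^ 2 * Isq
  have h3 : (e - f * Complex.I) ^ 2 - 1 = -2 * f * (f + e * Complex.I) := by
    linear_combination hef + f ^ 2 * Isq
  have h4 : -((c + d * Complex.I) ^ 2) + 1 = 2 * d * (d - c * Complex.I) := by
    linear_combination (-1 : ℂ) * hcd - d ^ 2 * Isq
  have h5 : -((c + d * Complex.I) ^ 2) - 1 = -2 * c * (c + d * Complex.I) := by
    linear_combination hcd - d ^ 2 * Isq
  have h6 : (e + f * Complex.I) ^ 2 - 1 = 2 * f * (e * Complex.I - f) := by
    linear_combination hef + f ^ 2 * Isq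
  rw [h2] at hs
  rw [h5] at hv
  have hb : b ≠ 0 := fun h => hs (by rw [h]; ring)
  have hc : c ≠ 0 := fun h => hv (by rw [h]; ring)
  rw [h1, h2, h3] at hA
  rw [h4, h5, h6] at hB
  have e1 : (A * B * (b * c)) * ((-2 * b * (b + a * Complex.I)) * (-2 * c * (c + d * Complex.I)))
      = (-(4 * a * d * f ^ 2))
          * ((-2 * b * (b + a * Complex.I)) * (-2 * c * (c + d * Complex.I))) := by
    calc (A * B * (b * c)) * ((-2 * b * (b + a * Complex.I)) * (-2 * c * (c + d * Complex.I)))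
        = (A * (-2 * b * (b + a * Complex.I))) * (B * (-2 * c * (c + d * Complex.I))) * (b * c) := by
          ring
      _ = (2 * a * (a - b * Complex.I) * (-2 * f * (f + e * Complex.I)))
            * ((2 * d * (d - c * Complex.I)) * (2 * f * (e * Complex.I - f))) * (b * c) := by
          rw [hA, hB]
      _ = (-(4 * a * d * f ^ 2))
            * ((-2 * b * (b + a * Complex.I)) * (-2 * c * (c + d * Complex.I))) := by
          linear_combination (-16 * a * d * f ^ 2 * b * c) *
            ((-(a * d - b * c - (a * c + b * d) * Complex.I)) * hef
              + ((a * d - b * c - (a * c + b * d) * Complex.I) * e ^ 2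
                  + b * c * (e ^ 2 * Complex.I ^ 2 - f ^ 2) - a * d) * Isq)
  have e2 : A * B * (b * c) = -(4 * a * d * f ^ 2) :=
    mul_right_cancel₀ (mul_ne_zero hs hv) e1
  field_simp
  linear_combination e2

private lemma root_pow (p n : ℕ) (hp : p ≠ 0) :
    Complex.exp (2 * ↑Real.pi * Complex.I / p) ^ n
      = (Complex.cos ((Real.pi * n / p : ℝ) : ℂ)
          + Complex.sin ((Real.pi * n / p : ℝ) : ℂ) * Complex.I) ^ 2 := by
  have hp' : (p : ℂ) ≠ 0 := Nat.cast_ne_zero.mpr hp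
  rw [Complex.cos_add_sin_I, ← Complex.exp_nat_mul, sq, ← Complex.exp_add]
  congr 1
  push_cast
  field_simp
  ring

private lemma mul_conj_sq (x y : ℂ) (h : x ^ 2 + y ^ 2 = 1) :
    (x + y * Complex.I) ^ 2 * (x - y * Complex.I) ^ 2 = 1 := by
  linear_combination (x ^ 2 - y ^ 2 * Complex.I ^ 2 + 1) * h
    + (-(y ^ 2) * (x ^ 2 - y ^ 2 * Complex.I ^ 2 + 1)) * Complex.I_sq

theorem deltaTau_eq_double_bracket_sum (p q : ℕ) (hp : 0 < p) (hq : 0 < q)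
    (hodd : Odd p) (hpq : Nat.Coprime p q)
    (qstar : ℕ) (hq1 : 1 ≤ qstar) (hq2 : qstar ≤ p - 1)
    (hinv : (q : ℤ) * (qstar : ℤ) ≡ 1 [ZMOD p])
    (l : ℕ) (hl0 : 0 < l) (hlp : l < p) (hle : Even l) :
    (deltaTau p q (l : ℤ) : ℂ) =
      (1 / (2 * (p : ℂ))) *
        ∑ t ∈ Polynomial.nthRootsFinset p (1 : ℂ),
          (2 * ∑ i ∈ Finset.Icc 1 (l - 1), t ^ (-(i : ℤ)) + t ^ (-(l : ℤ)) + 1) *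
            (2 * ∑ j ∈ Finset.Icc 1 (qstar * l - 1), (-1) ^ j * t ^ (q * j) + t ^ l + 1) := by
  haveI : NeZero p := ⟨hp.ne'⟩
  have hl1 : 1 ≤ l := hl0
  have hm1 : 1 ≤ qstar * l := Nat.one_le_iff_ne_zero.mpr (Nat.mul_ne_zero (by omega) (by omega))
  have hmeven : Even (qstar * l) := hle.mul_left qstar
  -- extract q * qstar = 1 + p * cc
  obtain ⟨cc, hcc⟩ : ∃ cc : ℕ, q * qstar = 1 + p * cc := by
    have hdvd : (p : ℤ) ∣ 1 - (q : ℤ) * (qstar : ℤ) := Int.ModEq.dvd hinv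
    obtain ⟨k, hk⟩ := hdvd
    have hk' : ((q * qstar : ℕ) : ℤ) = 1 + (p : ℤ) * (-k) := by push_cast; linarith
    have hqq1 : (1 : ℤ) ≤ ((q * qstar : ℕ) : ℤ) := by
      exact_mod_cast Nat.one_le_iff_ne_zero.mpr (Nat.mul_ne_zero (by omega) (by omega))
    have hknn : 0 ≤ -k := by
      by_contra hneg
      push_neg at hneg
      have : (p : ℤ) * (-k) < 0 :=
        mul_neg_of_pos_of_neg (by exact_mod_cast hp) hneg
      omega
    refine ⟨(-k).toNat, ?_⟩
    have h2 : ((q * qstar : ℕ) : ℤ) = ((1 + p * (-k).toNat : ℕ) : ℤ) := by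
      push_cast
      rw [Int.toNat_of_nonneg hknn]
      linarith
    exact_mod_cast h2
  set ζ : ℂ := Complex.exp (2 * ↑Real.pi * Complex.I / p) with hζdef
  have hζ : IsPrimitiveRoot ζ p := Complex.isPrimitiveRoot_exp p hp.ne'
  set G : ℂ → ℂ := fun t =>
    (2 * ∑ i ∈ Finset.Icc 1 (l - 1), t ^ (-(i : ℤ)) + t ^ (-(l : ℤ)) + 1) *
      (2 * ∑ j ∈ Finset.Icc 1 (qstar * l - 1), (-1) ^ j * t ^ (q * j) + t ^ l + 1) with hGdef
  -- reindex the sum over roots of unity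
  have hre : ∑ t ∈ Polynomial.nthRootsFinset p (1 : ℂ), G t = ∑ k ∈ Finset.range p, G (ζ ^ k) := by
    refine (Finset.sum_bij (fun k _ => ζ ^ k) (fun k _ => ?_) (fun a ha b hb h => ?_)
      (fun t ht => ?_) (fun a ha => rfl)).symm
    · exact (Polynomial.mem_nthRootsFinset hp (1 : ℂ)).2
        (by rw [← pow_mul, mul_comm, pow_mul, hζ.pow_eq_one, one_pow])
    · exact hζ.pow_inj (Finset.mem_range.1 ha) (Finset.mem_range.1 hb) h
    · obtain ⟨i, hi, hit⟩ :=
        hζ.eq_pow_of_pow_eq_one ((Polynomial.mem_nthRootsFinset hp (1 : ℂ)).1 ht)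
      exact ⟨i, Finset.mem_range.2 hi, hit⟩
  -- split off k = 0
  have h0mem : (0 : ℕ) ∈ Finset.range p := Finset.mem_range.2 hp
  have herase : (Finset.range p).erase 0 = Finset.Icc 1 (p - 1) := by
    ext x
    simp only [Finset.mem_erase, Finset.mem_range, Finset.mem_Icc]
    omega
  have hsplit : ∑ k ∈ Finset.range p, G (ζ ^ k)
      = G 1 + ∑ k ∈ Finset.Icc 1 (p - 1), G (ζ ^ k) := by
    rw [← Finset.add_sum_erase _ _ h0mem, herase, pow_zero]
  -- value at t = 1
  have hG1 : G 1 = 0 := by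
    have h := bracket_key (-1 : ℂ) (qstar * l) hm1
    rw [hmeven.neg_one_pow] at h
    have h0 : ((-1 : ℂ) - 1) ≠ 0 := by norm_num
    have h2 : (2 * ∑ j ∈ Finset.Icc 1 (qstar * l - 1), (-1 : ℂ) ^ j + 1 + 1) = 0 := by
      have := mul_eq_zero.1 (by rw [h]; ring : ((-1 : ℂ) - 1) *
        (2 * ∑ j ∈ Finset.Icc 1 (qstar * l - 1), (-1 : ℂ) ^ j + 1 + 1) = 0)
      exact this.resolve_left h0
    rw [hGdef]
    simp only [one_pow, mul_one, one_zpow]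
    rw [h2, mul_zero]
  -- the main pointwise identity
  have hmain : ∀ k ∈ Finset.Icc 1 (p - 1), G (ζ ^ k) =
      ((4 * Real.cot (Real.pi * k / p) * Real.cot (Real.pi * q * k / p + Real.pi / 2) *
        (Real.sin (Real.pi * k * l / p)) ^ 2 : ℝ) : ℂ) := by
    intro k hk
    rw [Finset.mem_Icc] at hk
    set t : ℂ := ζ ^ k with ht
    have htp : t ^ p = 1 := by rw [ht, ← pow_mul, mul_comm, pow_mul, hζ.pow_eq_one, one_pow]
    have ht0 : t ≠ 0 := pow_ne_zero _ (Complex.exp_ne_zero _)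
    have ht1 : t ≠ 1 := by
      intro h
      have : k = 0 := hζ.pow_inj (by omega) hp (by rw [pow_zero]; exact h)
      omega
    have htq : t ^ q ≠ -1 := by
      intro h
      have h1 : (t ^ q) ^ p = 1 := by rw [← pow_mul, mul_comm, pow_mul, htp, one_pow]
      rw [h, hodd.neg_one_pow] at h1
      norm_num at h1
    set θ : ℝ := Real.pi * k / p with hθ
    set φ : ℝ := Real.pi * q * k / p with hφ
    set ψ : ℝ := Real.pi * k * l / p with hψ
    set a : ℂ := Complex.cos (θ : ℂ) with ha
    set b : ℂ := Complex.sin (θ : ℂ) with hb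
    set c : ℂ := Complex.cos (φ : ℂ) with hc
    set d : ℂ := Complex.sin (φ : ℂ) with hd
    set e : ℂ := Complex.cos (ψ : ℂ) with he
    set f : ℂ := Complex.sin (ψ : ℂ) with hf
    have hab : a ^ 2 + b ^ 2 = 1 := Complex.cos_sq_add_sin_sq _
    have hcd : c ^ 2 + d ^ 2 = 1 := Complex.cos_sq_add_sin_sq _
    have hef : e ^ 2 + f ^ 2 = 1 := Complex.cos_sq_add_sin_sq _
    have hta : t = (a + b * Complex.I) ^ 2 := by
      rw [ht, hζdef, root_pow p k hp.ne', ha, hb, hθ]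
    have htq2 : t ^ q = (c + d * Complex.I) ^ 2 := by
      have hang : (Real.pi * ((k * q : ℕ) : ℝ) / p) = φ := by push_cast; ring
      rw [ht, ← pow_mul, hζdef, root_pow p (k * q) hp.ne', hang, hc, hd]
    have htl : t ^ l = (e + f * Complex.I) ^ 2 := by
      have hang : (Real.pi * ((k * l : ℕ) : ℝ) / p) = ψ := by push_cast; ring
      rw [ht, ← pow_mul, hζdef, root_pow p (k * l) hp.ne', hang, he, hf]
    have hti : t⁻¹ = (a - b * Complex.I) ^ 2 := by
      rw [hta]; exact inv_eq_of_mul_eq_one_right (mul_conj_sq a b hab)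
    have htli : (t ^ l)⁻¹ = (e - f * Complex.I) ^ 2 := by
      rw [htl]; exact inv_eq_of_mul_eq_one_right (mul_conj_sq e f hef)
    have hpl : (t⁻¹) ^ l = (e - f * Complex.I) ^ 2 := by rw [inv_pow, htli]
    -- power congruence: t^(q*(qstar*l)) = t^l
    have hpow : (t ^ q) ^ (qstar * l) = t ^ l := by
      rw [← pow_mul]
      have : q * (qstar * l) = l + p * (cc * l) := by
        rw [← mul_assoc, hcc]; ring
      rw [this, pow_add, pow_mul, htp, one_pow, mul_one]
    have hvm : (-(t ^ q)) ^ (qstar * l) = t ^ l := by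
      rw [hmeven.neg_pow, hpow]
    -- rewrite brackets
    have hAval : (2 * ∑ i ∈ Finset.Icc 1 (l - 1), t ^ (-(i : ℤ)) + t ^ (-(l : ℤ)) + 1)
        = 2 * ∑ i ∈ Finset.Icc 1 (l - 1), (t⁻¹) ^ i + (t⁻¹) ^ l + 1 := by
      simp [zpow_neg, zpow_natCast, inv_pow]
    have hBval : (2 * ∑ j ∈ Finset.Icc 1 (qstar * l - 1), (-1 : ℂ) ^ j * t ^ (q * j) + t ^ l + 1)
        = 2 * ∑ j ∈ Finset.Icc 1 (qstar * l - 1), (-(t ^ q)) ^ j + (-(t ^ q)) ^ (qstar * l) + 1 := by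
      have hsum : ∑ j ∈ Finset.Icc 1 (qstar * l - 1), (-1 : ℂ) ^ j * t ^ (q * j)
          = ∑ j ∈ Finset.Icc 1 (qstar * l - 1), (-(t ^ q)) ^ j :=
        Finset.sum_congr rfl fun j _ => by rw [pow_mul]; exact (neg_pow (t ^ q) j).symm
      rw [hvm, hsum]
    have hs : (a - b * Complex.I) ^ 2 - 1 ≠ 0 := by
      rw [← hti]
      intro h
      exact ht1 (inv_eq_one.1 (sub_eq_zero.1 h))
    have hv : -((c + d * Complex.I) ^ 2) - 1 ≠ 0 := by
      rw [← htq2]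
      intro h
      exact htq (by linear_combination -h)
    have hA : (2 * ∑ i ∈ Finset.Icc 1 (l - 1), t ^ (-(i : ℤ)) + t ^ (-(l : ℤ)) + 1)
        * ((a - b * Complex.I) ^ 2 - 1)
        = ((a - b * Complex.I) ^ 2 + 1) * ((e - f * Complex.I) ^ 2 - 1) := by
      rw [hAval, ← hti, ← hpl]
      linear_combination bracket_key t⁻¹ l hl1
    have hB : (2 * ∑ j ∈ Finset.Icc 1 (qstar * l - 1), (-1 : ℂ) ^ j * t ^ (q * j) + t ^ l + 1)
        * (-((c + d * Complex.I) ^ 2) - 1)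
        = (-((c + d * Complex.I) ^ 2) + 1) * ((e + f * Complex.I) ^ 2 - 1) := by
      rw [hBval, ← htq2, ← htl, ← hvm]
      linear_combination bracket_key (-(t ^ q)) (qstar * l) hm1
    have hfin := master a b c d e f _ _ hab hcd hef hs hv hA hB
    rw [hGdef]
    simp only []
    rw [hfin]
    rw [Real.cot_eq_cos_div_sin, Real.cot_eq_cos_div_sin,
      Real.cos_add_pi_div_two, Real.sin_add_pi_div_two]
    push_cast
    rw [ha, hb, hc, hd, hf]
    push_cast
    ring
  -- assemble
  have hpc : (p : ℂ) ≠ 0 := Nat.cast_ne_zero.mpr hp.ne'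
  calc (deltaTau p q (l : ℤ) : ℂ)
      = (1 / (2 * (p : ℂ))) * ∑ k ∈ Finset.Icc 1 (p - 1),
          ((4 * Real.cot (Real.pi * k / p) * Real.cot (Real.pi * q * k / p + Real.pi / 2) *
            (Real.sin (Real.pi * k * l / p)) ^ 2 : ℝ) : ℂ) := by
        simp only [deltaTau]
        push_cast
        rw [Finset.mul_sum, Finset.mul_sum]
        refine Finset.sum_congr rfl fun k hk => ?_
        field_simp
        ring
    _ = (1 / (2 * (p : ℂ))) * (G 1 + ∑ k ∈ Finset.Icc 1 (p - 1), G (ζ ^ k)) := by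
        rw [hG1, Finset.sum_congr rfl hmain, zero_add]
    _ = _ := by rw [← hsplit, ← hre]
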